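/- Let (X,μ,F) be a nonsingular E-branching system for a countable directed graph E, let P_F denote the Perron–Frobenius operator of F on L¹(X,μ), and let π denote the induced representation operators. If φ ∈ L²(X,μ) is real-valued with support contained in R_{e_1} ∪ ⋯ ∪ R_{e_N} (a finite union), then P_F(φ²) = Σ_{i=1}^N (π(S_{e_i})* φ)², where π(S_e)*φ = χ_{D_{r(e)}}·Φ_{f_e}^{1/2}·(φ∘f_e). -/

import Mathlib

open MeasureTheory Set
open scoped ENNReal symmDiff

/-- In a nonsingular E-branching system `(X, μ, F)`, if `φ ∈ L²(X,μ)` is real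
valued with support in a finite union `R_{e_1} ∪ ⋯ ∪ R_{e_N}`, then
`P_F(φ²) = Σ_{i=1}^N (π(S_{e_i})* φ)²`, where `π(S_e)* φ = χ_{D_{r(e)}}·Φ_{f_e}^{1/2}·(φ∘f_e)`
and `P_F` is the Perron–Frobenius operator of `F`. -/
theorem stmt8 {X : Type*} [MeasurableSpace X] (μ : Measure X) [SigmaFinite μ]
    {E0 E1 : Type*} [Countable E0] [Countable E1] (r s : E1 → E0)
    (R : E1 → Set X) (D : E0 → Set X)
    (hRmeas : ∀ e, MeasurableSet (R e)) (hDmeas : ∀ v, MeasurableSet (D v))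
    (hRdisj : ∀ e d : E1, e ≠ d → μ (R e ∩ R d) = 0)
    (hDdisj : ∀ u v : E0, u ≠ v → μ (D u ∩ D v) = 0)
    (hRD : ∀ e : E1, μ (R e \ D (s e)) = 0)
    (f finv : E1 → X → X) (hf : ∀ e, Measurable (f e)) (hfinv : ∀ e, Measurable (finv e))
    (hmaps : ∀ e, Set.MapsTo (f e) (D (r e)) (R e))
    (hmapsinv : ∀ e, Set.MapsTo (finv e) (R e) (D (r e)))
    (himage : ∀ e, μ ((f e '' D (r e)) ∆ R e) = 0)
    (hright : ∀ e, ∀ᵐ x ∂μ.restrict (R e), f e (finv e x) = x)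
    (hleft : ∀ e, ∀ᵐ x ∂μ.restrict (D (r e)), finv e (f e x) = x)
    -- Φ_{f_e} is the Radon–Nikodym derivative of μ∘f_e with respect to μ on D_{r(e)}:
    (Φ : E1 → X → ℝ) (hΦmeas : ∀ e, Measurable (Φ e)) (hΦnonneg : ∀ e, 0 ≤ Φ e)
    (hRN : ∀ e, (μ.restrict (R e)).map (finv e)
      = (μ.restrict (D (r e))).withDensity (fun x => ENNReal.ofReal (Φ e x)))
    -- F is a nonsingular map with F = f_e⁻¹ a.e. on R_e:
    (F : X → X) (hFmeas : Measurable F)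
    (hFns : ∀ A : Set X, MeasurableSet A → μ A = 0 → μ (F ⁻¹' A) = 0)
    (hF : ∀ e, ∀ᵐ x ∂μ.restrict (R e), F x = finv e x)
    -- P_F is the Perron–Frobenius operator of F on L¹(X,μ):
    (PF : (X → ℝ) → (X → ℝ))
    (hPF : ∀ ψ : X → ℝ, Integrable ψ μ → Integrable (PF ψ) μ ∧
      ∀ A : Set X, MeasurableSet A → ∫ x in A, PF ψ x ∂μ = ∫ x in F ⁻¹' A, ψ x ∂μ)
    -- the finitely many edges e_1, …, e_N:
    (N : ℕ) (e : Fin N → E1) (hinj : Function.Injective e)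
    -- φ ∈ L²(X,μ) is real valued with support contained in R_{e_1} ∪ ⋯ ∪ R_{e_N}:
    (φ : X → ℝ) (hφmeas : Measurable φ) (hφL2 : MemLp φ 2 μ)
    (hsupp : ∀ᵐ x ∂μ, x ∉ ⋃ i : Fin N, R (e i) → φ x = 0) :
    PF (fun x => φ x ^ 2) =ᵐ[μ]
      fun x => ∑ i : Fin N,
        ((D (r (e i))).indicator (fun y => Real.sqrt (Φ (e i) y) * φ (f (e i) y)) x) ^ 2 := by
  classical
  set ψ : X → ℝ := fun x => φ x ^ 2 with hψdef
  have hψnn : ∀ x, 0 ≤ ψ x := fun x => sq_nonneg _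
  have hψmeas : Measurable ψ := hφmeas.pow_const 2
  have hψint : Integrable ψ μ := hφL2.integrable_sq
  -- key per-edge change of variables at the lintegral level
  have key : ∀ (ε : E1) (A : Set X), MeasurableSet A →
      ∫⁻ x in F ⁻¹' A ∩ R ε, ENNReal.ofReal (ψ x) ∂μ
        = ∫⁻ x in A, (D (r ε)).indicator
            (fun y => ENNReal.ofReal (Φ ε y * φ (f ε y) ^ 2)) x ∂μ := by
    intro ε A hA
    have hu' : Measurable fun y => ENNReal.ofReal (φ (f ε y) ^ 2) :=
      ENNReal.measurable_ofReal.comp ((hφmeas.comp (hf ε)).pow_const 2)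
    have stepA : ∫⁻ x in F ⁻¹' A ∩ R ε, ENNReal.ofReal (ψ x) ∂μ
        = ∫⁻ x, (F ⁻¹' A).indicator (fun x => ENNReal.ofReal (ψ x)) x ∂μ.restrict (R ε) := by
      rw [lintegral_indicator (hFmeas hA), Measure.restrict_restrict (hFmeas hA)]
    have stepB : (fun x => (F ⁻¹' A).indicator (fun x => ENNReal.ofReal (ψ x)) x)
        =ᵐ[μ.restrict (R ε)]
        fun x => A.indicator (fun y => ENNReal.ofReal (φ (f ε y) ^ 2)) (finv ε x) := by
      filter_upwards [hF ε, hright ε] with x h1 h2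
      simp only [Set.indicator, Set.mem_preimage, h1]
      by_cases hx : finv ε x ∈ A
      · simp only [if_pos hx, h2, hψdef]
      · simp only [if_neg hx]
    have stepC : ∫⁻ x, A.indicator (fun y => ENNReal.ofReal (φ (f ε y) ^ 2)) (finv ε x)
          ∂μ.restrict (R ε)
        = ∫⁻ y, A.indicator (fun y => ENNReal.ofReal (φ (f ε y) ^ 2)) y
          ∂((μ.restrict (R ε)).map (finv ε)) :=
      (lintegral_map (hu'.indicator hA) (hfinv ε)).symm
    rw [stepA, lintegral_congr_ae stepB, stepC, hRN ε,
      lintegral_withDensity_eq_lintegral_mul _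
        ((hΦmeas ε).ennreal_ofReal) (hu'.indicator hA)]
    have hptw : ∀ a, ((fun y => ENNReal.ofReal (Φ ε y)) *
          A.indicator (fun y => ENNReal.ofReal (φ (f ε y) ^ 2))) a
        = A.indicator (fun y => ENNReal.ofReal (Φ ε y * φ (f ε y) ^ 2)) a := by
      intro a
      by_cases ha : a ∈ A <;>
        simp [Set.indicator, ha, ENNReal.ofReal_mul (hΦnonneg ε a)]
    simp only [hptw]
    rw [lintegral_indicator hA, Measure.restrict_restrict hA,
      lintegral_indicator (hDmeas (r ε)), Measure.restrict_restrict (hDmeas (r ε)),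
      Set.inter_comm A (D (r ε))]
  -- the summand functions
  set T : Fin N → X → ℝ :=
    fun i => (D (r (e i))).indicator (fun y => Φ (e i) y * φ (f (e i) y) ^ 2) with hT
  have hTnn : ∀ i x, 0 ≤ T i x := fun i x =>
    Set.indicator_nonneg (fun y _ => mul_nonneg (hΦnonneg _ y) (sq_nonneg _)) x
  have hTmeas : ∀ i, Measurable (T i) := fun i =>
    ((hΦmeas (e i)).mul ((hφmeas.comp (hf (e i))).pow_const 2)).indicator (hDmeas _)
  have hofRealT : ∀ i x, ENNReal.ofReal (T i x)
      = (D (r (e i))).indicator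
        (fun y => ENNReal.ofReal (Φ (e i) y * φ (f (e i) y) ^ 2)) x := by
    intro i x
    by_cases hx : x ∈ D (r (e i)) <;> simp [hT, Set.indicator, hx]
  have hψlint : ∫⁻ x, ENNReal.ofReal (ψ x) ∂μ < ∞ := by
    have h2 : ∫⁻ x, ENNReal.ofReal (ψ x) ∂μ = ∫⁻ x, (‖ψ x‖₊ : ℝ≥0∞) ∂μ :=
      lintegral_congr fun x => (Real.enorm_eq_ofReal (hψnn x)).symm
    rw [h2]; exact hψint.hasFiniteIntegral
  have hTlint : ∀ i, ∫⁻ x, ENNReal.ofReal (T i x) ∂μ < ∞ := by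
    intro i
    calc ∫⁻ x, ENNReal.ofReal (T i x) ∂μ
        = ∫⁻ x in (Set.univ : Set X), (D (r (e i))).indicator
            (fun y => ENNReal.ofReal (Φ (e i) y * φ (f (e i) y) ^ 2)) x ∂μ := by
          rw [setLIntegral_univ]; exact lintegral_congr fun x => hofRealT i x
      _ = ∫⁻ x in F ⁻¹' (Set.univ : Set X) ∩ R (e i), ENNReal.ofReal (ψ x) ∂μ :=
          (key (e i) Set.univ MeasurableSet.univ).symm
      _ ≤ ∫⁻ x, ENNReal.ofReal (ψ x) ∂μ := lintegral_mono' Measure.restrict_le_self le_rfl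
      _ < ∞ := hψlint
  have hTint : ∀ i, Integrable (T i) μ := by
    intro i
    refine ⟨(hTmeas i).aestronglyMeasurable, ?_⟩
    have h2 : ∫⁻ x, (‖T i x‖₊ : ℝ≥0∞) ∂μ = ∫⁻ x, ENNReal.ofReal (T i x) ∂μ :=
      lintegral_congr fun x => Real.enorm_eq_ofReal (hTnn i x)
    show ∫⁻ x, (‖T i x‖₊ : ℝ≥0∞) ∂μ < ∞
    rw [h2]; exact hTlint i
  -- a.e. splitting of ψ along the a.e.-disjoint ranges
  have hdisj_ae : ∀ᵐ x ∂μ, ∀ i j : Fin N, i ≠ j → x ∉ R (e i) ∩ R (e j) := by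
    rw [ae_all_iff]; intro i; rw [ae_all_iff]; intro j
    rcases eq_or_ne i j with hij | hij
    · exact Filter.Eventually.of_forall fun x h => absurd hij h
    · exact (measure_eq_zero_iff_ae_notMem.mp (hRdisj _ _ fun h => hij (hinj h))).mono
        fun x hx _ => hx
  have hsplit : ∀ᵐ x ∂μ, ψ x = ∑ i : Fin N, (R (e i)).indicator ψ x := by
    filter_upwards [hsupp, hdisj_ae] with x hx hdx
    by_cases hmem : x ∈ ⋃ i, R (e i)
    · obtain ⟨i, hi⟩ := Set.mem_iUnion.mp hmem
      rw [Finset.sum_eq_single i]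
      · rw [Set.indicator_of_mem hi]
      · intro j _ hji
        exact Set.indicator_of_notMem (fun hj => hdx j i hji ⟨hj, hi⟩) _
      · intro h; exact absurd (Finset.mem_univ i) h
    · have h0 : ψ x = 0 := by simp [hψdef, hx hmem]
      rw [h0]
      symm
      refine Finset.sum_eq_zero fun i _ => ?_
      by_cases hxi : x ∈ R (e i)
      · rw [Set.indicator_of_mem hxi, h0]
      · rw [Set.indicator_of_notMem hxi]
  -- the main set-integral identity
  have hmain : ∀ A : Set X, MeasurableSet A →
      ∫ x in A, PF ψ x ∂μ = ∫ x in A, (∑ i : Fin N, T i x) ∂μ := by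
    intro A hA
    rw [(hPF ψ hψint).2 A hA]
    have l1 : ∫ x in F ⁻¹' A, ψ x ∂μ
        = (∫⁻ x in F ⁻¹' A, ENNReal.ofReal (ψ x) ∂μ).toReal :=
      integral_eq_lintegral_of_nonneg_ae (Filter.Eventually.of_forall fun x => hψnn x)
        hψmeas.aestronglyMeasurable
    have l2 : ∫⁻ x in F ⁻¹' A, ENNReal.ofReal (ψ x) ∂μ
        = ∑ i : Fin N, ∫⁻ x in A, (D (r (e i))).indicator
            (fun y => ENNReal.ofReal (Φ (e i) y * φ (f (e i) y) ^ 2)) x ∂μ := by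
      have hae : (fun x => ENNReal.ofReal (ψ x))
          =ᵐ[μ.restrict (F ⁻¹' A)]
          fun x => ∑ i : Fin N, (R (e i)).indicator (fun y => ENNReal.ofReal (ψ y)) x := by
        refine ae_restrict_of_ae ?_
        filter_upwards [hsplit] with x hx
        rw [hx, ENNReal.ofReal_sum_of_nonneg
          (fun i _ => Set.indicator_nonneg (fun y _ => hψnn y) x)]
        refine Finset.sum_congr rfl fun i _ => ?_
        by_cases hxi : x ∈ R (e i) <;> simp [Set.indicator, hxi]
      rw [lintegral_congr_ae hae, lintegral_finset_sum _
        (fun i _ => (hψmeas.ennreal_ofReal).indicator (hRmeas (e i)))]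
      refine Finset.sum_congr rfl fun i _ => ?_
      rw [lintegral_indicator (hRmeas (e i)), Measure.restrict_restrict (hRmeas (e i)),
        Set.inter_comm (R (e i)) (F ⁻¹' A)]
      exact key (e i) A hA
    have hfinA : ∀ i : Fin N, (∫⁻ x in A, (D (r (e i))).indicator
        (fun y => ENNReal.ofReal (Φ (e i) y * φ (f (e i) y) ^ 2)) x ∂μ) ≠ ∞ := by
      intro i
      refine ne_of_lt (lt_of_le_of_lt ?_ (hTlint i))
      refine le_trans (le_of_eq (lintegral_congr fun x => (hofRealT i x).symm)) ?_
      exact lintegral_mono' Measure.restrict_le_self le_rfl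
    have l4 : ∀ i : Fin N, (∫⁻ x in A, (D (r (e i))).indicator
        (fun y => ENNReal.ofReal (Φ (e i) y * φ (f (e i) y) ^ 2)) x ∂μ).toReal
        = ∫ x in A, T i x ∂μ := by
      intro i
      rw [integral_eq_lintegral_of_nonneg_ae (Filter.Eventually.of_forall fun x => hTnn i x)
        (hTmeas i).aestronglyMeasurable]
      congr 1
      exact lintegral_congr fun x => (hofRealT i x).symm
    rw [l1, l2, ENNReal.toReal_sum (fun i _ => hfinA i),
      integral_finset_sum _ (fun i _ => (hTint i).integrableOn)]
    exact Finset.sum_congr rfl fun i _ => l4 i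
  have hfinal : PF ψ =ᵐ[μ] fun x => ∑ i : Fin N, T i x :=
    ae_eq_of_forall_setIntegral_eq_of_sigmaFinite
      (fun s _ _ => ((hPF ψ hψint).1).integrableOn)
      (fun s _ _ => (integrable_finset_sum _ fun i _ => hTint i).integrableOn)
      (fun s hs _ => hmain s hs)
  have hsq : ∀ (i : Fin N) x, ((D (r (e i))).indicator
      (fun y => Real.sqrt (Φ (e i) y) * φ (f (e i) y)) x) ^ 2 = T i x := by
    intro i x
    by_cases hx : x ∈ D (r (e i))
    · simp [hT, Set.indicator_of_mem hx, mul_pow, Real.sq_sqrt (hΦnonneg (e i) x)]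
    · simp [hT, Set.indicator_of_notMem hx]
  have hfun : (fun x => ∑ i : Fin N, ((D (r (e i))).indicator
      (fun y => Real.sqrt (Φ (e i) y) * φ (f (e i) y)) x) ^ 2)
      = fun x => ∑ i : Fin N, T i x := by
    funext x
    exact Finset.sum_congr rfl fun i _ => hsq i x
  rw [hfun]
  exact hfinal
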